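/- arXiv:2007.00642 — 2 statements merged into one kernel-verified Lean document; each statement's English description precedes it below -/
import Mathlib

section
/- TVO lower bound gap: for any partition 0 = β_0 < β_1 < … < β_K = 1, log(Z_1/Z_0) − Σ_{k=1}^K (β_k − β_{k-1}) E_{π_{β_{k-1}}}[T] = Σ_{k=1}^K KL(π_{β_{k-1}} ‖ π_{β_k}), and hence the left-Riemann sum Σ_k Δβ_k E_{π_{β_{k-1}}}[T] is a lower bound on log(Z_1/Z_0). -/
open MeasureTheory

/-- TVO lower bound gap. For any partition 0 = β₀ < … < β_K = 1,
log(Z₁/Z₀) − Σ_k Δβ_k E_{π_{β_{k-1}}}[T] = Σ_k KL(π_{β_{k-1}} ‖ π_{β_k}),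
hence the left-Riemann sum is a lower bound on log(Z₁/Z₀). -/
theorem tvo_lower_bound_gap {α : Type*} [MeasurableSpace α] (μ : Measure α)
    (π0 T : α → ℝ) (hpos : ∀ z, 0 < π0 z)
    (Z : ℝ → ℝ) (hZ : ∀ b, Z b = ∫ z, π0 z * Real.exp (b * T z) ∂μ)
    (hZpos : ∀ b, 0 < Z b)
    (π : ℝ → α → ℝ)
    (hπ : ∀ b z, π b z = π0 z * Real.exp (b * T z) / Z b)
    (hprob : ∀ b, ∫ z, π b z ∂μ = 1)
    (hT : ∀ b, Integrable (fun z => π b z * T z) μ)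
    (K : ℕ) (hK : 0 < K) (β : ℕ → ℝ)
    (h0 : β 0 = 0) (h1 : β K = 1)
    (hmono : ∀ k < K, β k < β (k + 1)) :
    (Real.log (Z 1 / Z 0)
        - ∑ k ∈ Finset.range K,
            (β (k + 1) - β k) * (∫ z, π (β k) z * T z ∂μ)
      = ∑ k ∈ Finset.range K,
          ∫ z, π (β k) z * Real.log (π (β k) z / π (β (k + 1)) z) ∂μ)
    ∧ (∑ k ∈ Finset.range K,
          (β (k + 1) - β k) * (∫ z, π (β k) z * T z ∂μ)
        ≤ Real.log (Z 1 / Z 0)) := by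
  have hπpos : ∀ b z, 0 < π b z := fun b z => by
    rw [hπ]
    exact div_pos (mul_pos (hpos z) (Real.exp_pos _)) (hZpos b)
  have hInt : ∀ b, Integrable (π b) μ := by
    intro b
    by_contra h
    have h1 := hprob b
    rw [integral_undef h] at h1
    norm_num at h1
  have hlog : ∀ a b z, Real.log (π a z / π b z)
      = (a - b) * T z + (Real.log (Z b) - Real.log (Z a)) := by
    intro a b z
    rw [Real.log_div (hπpos a z).ne' (hπpos b z).ne', hπ, hπ,
        Real.log_div (mul_pos (hpos z) (Real.exp_pos _)).ne' (hZpos a).ne',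
        Real.log_div (mul_pos (hpos z) (Real.exp_pos _)).ne' (hZpos b).ne',
        Real.log_mul (hpos z).ne' (Real.exp_pos _).ne',
        Real.log_mul (hpos z).ne' (Real.exp_pos _).ne',
        Real.log_exp, Real.log_exp]
    ring
  have hptw : ∀ a b z, π a z * Real.log (π a z / π b z)
      = (a - b) * (π a z * T z) + (Real.log (Z b) - Real.log (Z a)) * π a z := by
    intro a b z
    rw [hlog]
    ring
  have hKLint : ∀ a b, Integrable (fun z => π a z * Real.log (π a z / π b z)) μ := by
    intro a b
    have he : (fun z => π a z * Real.log (π a z / π b z))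
        = fun z => (a - b) * (π a z * T z) + (Real.log (Z b) - Real.log (Z a)) * π a z :=
      funext (hptw a b)
    rw [he]
    exact ((hT a).const_mul _).add ((hInt a).const_mul _)
  have hKLval : ∀ a b, (∫ z, π a z * Real.log (π a z / π b z) ∂μ)
      = (a - b) * (∫ z, π a z * T z ∂μ) + (Real.log (Z b) - Real.log (Z a)) := by
    intro a b
    simp only [hptw]
    rw [integral_add ((hT a).const_mul _) ((hInt a).const_mul _),
        integral_const_mul, integral_const_mul, hprob a, mul_one]
  have hKLnonneg : ∀ a b, 0 ≤ ∫ z, π a z * Real.log (π a z / π b z) ∂μ := by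
    intro a b
    have hle : ∫ z, (π a z - π b z) ∂μ ≤ ∫ z, π a z * Real.log (π a z / π b z) ∂μ := by
      apply integral_mono ((hInt a).sub (hInt b)) (hKLint a b)
      intro z
      have h1 : Real.log (π b z / π a z) ≤ π b z / π a z - 1 :=
        Real.log_le_sub_one_of_pos (div_pos (hπpos b z) (hπpos a z))
      have h2 : Real.log (π b z / π a z) = -Real.log (π a z / π b z) := by
        rw [← Real.log_inv, inv_div]
      rw [h2] at h1
      have h3 := mul_le_mul_of_nonneg_left h1 (hπpos a z).le
      rw [mul_neg] at h3
      have h4 : π a z * (π b z / π a z - 1) = π b z - π a z := by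
        rw [mul_sub, mul_one, mul_div_cancel₀ _ (hπpos a z).ne']
      rw [h4] at h3
      have h5 : (π a - π b) z = π a z - π b z := rfl
      linarith [h3, h5]
    have hzero : (∫ z, (π a z - π b z) ∂μ) = 0 := by
      rw [integral_sub (hInt a) (hInt b), hprob, hprob]
      ring
    linarith
  have heq : Real.log (Z 1 / Z 0)
      - ∑ k ∈ Finset.range K, (β (k + 1) - β k) * (∫ z, π (β k) z * T z ∂μ)
      = ∑ k ∈ Finset.range K,
          ∫ z, π (β k) z * Real.log (π (β k) z / π (β (k + 1)) z) ∂μ := by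
    have hsum : ∑ k ∈ Finset.range K,
        (∫ z, π (β k) z * Real.log (π (β k) z / π (β (k + 1)) z) ∂μ)
        = ∑ k ∈ Finset.range K,
          (-((β (k + 1) - β k) * (∫ z, π (β k) z * T z ∂μ))
            + (Real.log (Z (β (k + 1))) - Real.log (Z (β k)))) := by
      refine Finset.sum_congr rfl fun k _ => ?_
      rw [hKLval]
      ring
    rw [hsum, Finset.sum_add_distrib, Finset.sum_range_sub (fun k => Real.log (Z (β k))),
        h0, h1, Real.log_div (hZpos 1).ne' (hZpos 0).ne', Finset.sum_neg_distrib]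
    ring
  refine ⟨heq, ?_⟩
  have hnn : 0 ≤ ∑ k ∈ Finset.range K,
      ∫ z, π (β k) z * Real.log (π (β k) z / π (β (k + 1)) z) ∂μ :=
    Finset.sum_nonneg fun k _ => hKLnonneg _ _
  linarith
end

section
/- The difference of endpoint mean parameters equals the symmetrized KL between q and the posterior: η_1 − η_0 = KL(q(z|x) ‖ p(z|x)) + KL(p(z|x) ‖ q(z|x)), where η_β = E_{π_β}[log(p(x,z)/q(z|x))] and π_β ∝ q^{1-β} p(x,·)^β. -/
open MeasureTheory

/-- the difference of endpoint mean parameters of the geometric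
mixture path π_β ∝ q^{1-β} pj^β equals the symmetrized KL between q and the
posterior pj/p(x):  η₁ − η₀ = KL(q ‖ p(·|x)) + KL(p(·|x) ‖ q). -/
theorem endpoint_moments_symmetrized_KL {α : Type*} [MeasurableSpace α]
    (μ : Measure α) (q pj : α → ℝ) (hq : ∀ z, 0 < q z) (hpj : ∀ z, 0 < pj z)
    (px : ℝ) (hpx : px = ∫ z, pj z ∂μ) (hpxpos : 0 < px)
    (hqprob : ∫ z, q z ∂μ = 1)
    (Z : ℝ → ℝ) (hZ : ∀ b, Z b = ∫ z, q z ^ (1 - b) * pj z ^ b ∂μ)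
    (hZpos : ∀ b, 0 < Z b)
    (η : ℝ → ℝ)
    (hη : ∀ b, η b =
      ∫ z, (q z ^ (1 - b) * pj z ^ b / Z b) * Real.log (pj z / q z) ∂μ)
    (hint0 : Integrable (fun z => q z * Real.log (q z / (pj z / px))) μ)
    (hint1 : Integrable (fun z => (pj z / px) * Real.log ((pj z / px) / q z)) μ) :
    η 1 - η 0
      = (∫ z, q z * Real.log (q z / (pj z / px)) ∂μ)
        + (∫ z, (pj z / px) * Real.log ((pj z / px) / q z) ∂μ) := by
  have hqz : ∀ z, q z ≠ 0 := fun z => (hq z).ne'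
  have hpjz : ∀ z, pj z ≠ 0 := fun z => (hpj z).ne'
  have hpxne : px ≠ 0 := hpxpos.ne'
  have hZ0 : Z 0 = 1 := by
    rw [hZ]; norm_num [Real.rpow_one, Real.rpow_zero, hqprob]
  have hZ1 : Z 1 = px := by
    rw [hZ]; norm_num [Real.rpow_one, Real.rpow_zero, hpx]
  have hqInt : Integrable q μ := by
    by_contra h
    rw [integral_undef h] at hqprob
    norm_num at hqprob
  have hpjInt : Integrable pj μ := by
    by_contra h
    rw [integral_undef h] at hpx
    exact hpxne (hpx.trans rfl)
  set f : α → ℝ := fun z => Real.log (pj z / q z) with hf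
  have e0 : ∀ z, q z * Real.log (q z / (pj z / px))
      = q z * Real.log px - q z * f z := by
    intro z
    have hlog : Real.log (q z / (pj z / px)) = Real.log px - f z := by
      rw [Real.log_div (hqz z) (div_pos (hpj z) hpxpos).ne', Real.log_div (hpjz z) hpxne,
        hf]
      simp only
      rw [Real.log_div (hpjz z) (hqz z)]
      ring
    rw [hlog]; ring
  have e1 : ∀ z, (pj z / px) * Real.log ((pj z / px) / q z)
      = (pj z / px) * f z - (pj z / px) * Real.log px := by
    intro z
    have hlog : Real.log ((pj z / px) / q z) = f z - Real.log px := by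
      rw [Real.log_div (div_pos (hpj z) hpxpos).ne' (hqz z), Real.log_div (hpjz z) hpxne,
        hf]
      simp only
      rw [Real.log_div (hpjz z) (hqz z)]
      ring
    rw [hlog]; ring
  have hInt_qf : Integrable (fun z => q z * f z) μ := by
    have h : Integrable
        (fun z => q z * Real.log px - q z * Real.log (q z / (pj z / px))) μ :=
      (hqInt.mul_const _).sub hint0
    have heq : (fun z => q z * f z)
        = fun z => q z * Real.log px - q z * Real.log (q z / (pj z / px)) := by
      funext z; rw [e0 z]; ring
    rw [heq]; exact h
  have hpjdInt : Integrable (fun z => pj z / px) μ := hpjInt.div_const px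
  have hInt_pf : Integrable (fun z => (pj z / px) * f z) μ := by
    have h : Integrable
        (fun z => (pj z / px) * Real.log ((pj z / px) / q z)
          + (pj z / px) * Real.log px) μ :=
      hint1.add (hpjdInt.mul_const _)
    have heq : (fun z => (pj z / px) * f z)
        = fun z => (pj z / px) * Real.log ((pj z / px) / q z)
          + (pj z / px) * Real.log px := by
      funext z; rw [e1 z]; ring
    rw [heq]; exact h
  have hη0 : η 0 = ∫ z, q z * f z ∂μ := by
    rw [hη, hZ0]
    norm_num [Real.rpow_one, Real.rpow_zero, hf]
  have hη1 : η 1 = ∫ z, (pj z / px) * f z ∂μ := by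
    rw [hη, hZ1]
    norm_num [Real.rpow_one, Real.rpow_zero, hf]
  have I0 : ∫ z, q z * Real.log (q z / (pj z / px)) ∂μ
      = Real.log px - ∫ z, q z * f z ∂μ := by
    calc ∫ z, q z * Real.log (q z / (pj z / px)) ∂μ
        = ∫ z, (q z * Real.log px - q z * f z) ∂μ := by simp_rw [e0]
      _ = (∫ z, q z * Real.log px ∂μ) - ∫ z, q z * f z ∂μ :=
          integral_sub (hqInt.mul_const _) hInt_qf
      _ = Real.log px - ∫ z, q z * f z ∂μ := by
          rw [integral_mul_const, hqprob, one_mul]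
  have I1 : ∫ z, (pj z / px) * Real.log ((pj z / px) / q z) ∂μ
      = (∫ z, (pj z / px) * f z ∂μ) - Real.log px := by
    calc ∫ z, (pj z / px) * Real.log ((pj z / px) / q z) ∂μ
        = ∫ z, ((pj z / px) * f z - (pj z / px) * Real.log px) ∂μ := by
          simp_rw [e1]
      _ = (∫ z, (pj z / px) * f z ∂μ) - ∫ z, (pj z / px) * Real.log px ∂μ :=
          integral_sub hInt_pf (hpjdInt.mul_const _)
      _ = (∫ z, (pj z / px) * f z ∂μ) - Real.log px := by
          rw [integral_mul_const, integral_div, ← hpx, div_self hpxne, one_mul]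
  rw [hη0, hη1, I0, I1]
  ring
end
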